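/- arXiv:1908.08817 — 2 statements merged into one kernel-verified Lean document; each statement's English description precedes it below -/
import Mathlib

section
/- Let k ≥ 2 and d ≥ (k+2)² be integers. Then K(d,k) > 2(d−1)k. -/
/-- Cyclic distance between two indices on a cycle of length `N`. -/
def cycDist {N : ℕ} (i j : ZMod N) : ℕ := min (j - i).val (i - j).val

/-- A `(d,k)` circuit code of length `N`: a simple cycle `x₁,…,x_N` in the
`d`-dimensional hypercube graph `I(d)` (vertices are binary vectors of length
`d`, adjacency is Hamming distance `1`, and the graph distance in `I(d)` equals
the Hamming distance) such that for any two vertices of the cycle the graph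
distance is at least the minimum of their distance along the cycle and `k`. -/
def IsCircuitCode (d k N : ℕ) (x : ZMod N → (Fin d → Bool)) : Prop :=
  3 ≤ N ∧ Function.Injective x ∧
    (∀ i : ZMod N, hammingDist (x i) (x (i + 1)) = 1) ∧
    (∀ i j : ZMod N, min (cycDist i j) k ≤ hammingDist (x i) (x j))

/-- `K d k`: the maximum length of a `(d,k)` circuit code. -/
noncomputable def K (d k : ℕ) : ℕ :=
  sSup {N | ∃ x : ZMod N → (Fin d → Bool), IsCircuitCode d k N x}

open Finset

def bdg (m t j : ℕ) : Bool := decide (j < t ∧ t ≤ j + m)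

def cycI (M x : ℤ) : ℤ := min (x % M) (-x % M)

lemma cycI_neg (M x : ℤ) : cycI M (-x) = cycI M x := by
  simp [cycI, min_comm]

lemma cycI_add_mul (M x c : ℤ) : cycI M (x + M * c) = cycI M x := by
  unfold cycI
  rw [Int.add_mul_emod_self_left, show -(x + M * c) = -x + M * (-c) by ring,
    Int.add_mul_emod_self_left]

lemma cycI_cast_lt (M δ : ℕ) (hδ : δ < M) :
    cycI (M : ℤ) (δ : ℤ) = ((min δ (M - δ) : ℕ) : ℤ) := by
  have hM : (0:ℤ) < M := by exact_mod_cast Nat.pos_of_ne_zero (by omega)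
  rcases Nat.eq_zero_or_pos δ with rfl | hpos
  · simp [cycI]
  · unfold cycI
    have h1 : (δ : ℤ) % M = δ := Int.emod_eq_of_lt (by positivity) (by exact_mod_cast hδ)
    have h2 : (-(δ:ℤ)) % M = M - δ := by
      rw [show -(δ:ℤ) = (M - δ) + M * (-1) by ring, Int.add_mul_emod_self_left]
      exact Int.emod_eq_of_lt (by omega) (by omega)
    rw [h1, h2]
    push_cast [Nat.cast_min, Nat.cast_sub hδ.le]
    omega

lemma emod_le_self (y M : ℤ) (hy : 0 ≤ y) (hM : 0 < M) : y % M ≤ y := by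
  have h := Int.emod_def y M
  have h2 : 0 ≤ y / M := Int.ediv_nonneg hy hM.le
  nlinarith [Int.emod_nonneg y hM.ne']

lemma cycI_le_abs (M : ℤ) (hM : 0 < M) (x c : ℤ) : cycI M x ≤ |x - c * M| := by
  rcases le_or_gt 0 (x - c * M) with h | h
  · rw [abs_of_nonneg h]
    have h1 : (x - c * M) % M = x % M := by
      rw [show x - c * M = x + M * (-c) by ring, Int.add_mul_emod_self_left]
    calc cycI M x ≤ x % M := min_le_left _ _
    _ = (x - c*M) % M := h1.symm
    _ ≤ x - c * M := emod_le_self _ _ h hM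
  · rw [abs_of_neg h]
    have h1 : (-(x - c * M)) % M = (-x) % M := by
      rw [show -(x - c * M) = -x + M * c by ring, Int.add_mul_emod_self_left]
    calc cycI M x ≤ (-x) % M := min_le_right _ _
    _ = (-(x - c*M)) % M := h1.symm
    _ ≤ -(x - c * M) := emod_le_self _ _ (by omega) hM

lemma cycI_exists (M : ℤ) (hM : 0 < M) (x : ℤ) : ∃ c, |x - c * M| = cycI M x := by
  have hnn : 0 ≤ x % M := Int.emod_nonneg x hM.ne'
  have hlt : x % M < M := Int.emod_lt_of_pos x hM
  have hdef : x - (x / M) * M = x % M := by rw [Int.emod_def]; ring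
  by_cases h0 : x % M = 0
  · refine ⟨x / M, ?_⟩
    have hneg : (-x) % M = 0 := by
      have : (M:ℤ) ∣ x := Int.dvd_of_emod_eq_zero h0
      exact Int.emod_eq_zero_of_dvd (dvd_neg.mpr this)
    rw [hdef, h0]
    simp [cycI, h0, hneg]
  · have hneg : (-x) % M = M - x % M := by
      rw [show -x = (M - x % M) + M * (-(x / M) - 1) by rw [Int.emod_def]; ring,
        Int.add_mul_emod_self_left]
      exact Int.emod_eq_of_lt (by omega) (by omega)
    rcases le_total (x % M) (M - x % M) with hle | hle
    · refine ⟨x / M, ?_⟩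
      rw [hdef, abs_of_nonneg hnn]
      unfold cycI; rw [hneg]; omega
    · refine ⟨x / M + 1, ?_⟩
      have : x - (x / M + 1) * M = x % M - M := by rw [Int.emod_def]; ring
      rw [this, abs_of_nonpos (by omega)]
      unfold cycI; rw [hneg]; omega

lemma ring_card (m τ τ' : ℕ) (hm : 0 < m) (h1 : τ ≤ τ') (h2 : τ' < 2*m) :
    ((Finset.range m).filter fun j => bdg m τ j ≠ bdg m τ' j).card
      = min (τ' - τ) (2*m - (τ' - τ)) := by
  rcases le_or_gt (τ' - τ) m with hδ | hδ
  · have hset : ((Finset.range m).filter fun j => bdg m τ j ≠ bdg m τ' j)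
        = Finset.Ico (τ - m) (τ' - m) ∪ Finset.Ico τ (min τ' m) := by
      ext j
      simp only [Finset.mem_filter, Finset.mem_range, Finset.mem_union, Finset.mem_Ico,
        bdg, ne_eq, decide_eq_decide]
      omega
    rw [hset, Finset.card_union_of_disjoint, Nat.card_Ico, Nat.card_Ico]
    · omega
    · simp only [Finset.disjoint_left, Finset.mem_Ico]; intro j hj hj2; omega
  · have hset : ((Finset.range m).filter fun j => bdg m τ j ≠ bdg m τ' j)
        = Finset.Ico (τ - m) (min τ m) ∪ Finset.Ico (τ' - m) (min τ' m) := by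
      ext j
      simp only [Finset.mem_filter, Finset.mem_range, Finset.mem_union, Finset.mem_Ico,
        bdg, ne_eq, decide_eq_decide]
      omega
    rw [hset, Finset.card_union_of_disjoint, Nat.card_Ico, Nat.card_Ico]
    · omega
    · simp only [Finset.disjoint_left, Finset.mem_Ico]; intro j hj hj2; omega

def ringY (m n u v j : ℕ) : Bool :=
  if j < m then bdg m (u % (2 * m)) j
  else if j < m + n then bdg n (v % (2 * n)) (j - m)
  else false

def XX (d m n s : ℕ) : Fin d → Bool := fun j => ringY m n ((s + 1) / 2) (s / 2) j.1

lemma hamming_XX (d m n s s' : ℕ) :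
    hammingDist (XX d m n s) (XX d m n s') =
      ((Finset.range d).filter fun t =>
        ringY m n ((s+1)/2) (s/2) t ≠ ringY m n ((s'+1)/2) (s'/2) t).card := by
  unfold hammingDist XX
  rw [Finset.card_filter, Finset.card_filter]
  exact Fin.sum_univ_eq_sum_range
    (fun t => if ringY m n ((s+1)/2) (s/2) t ≠ ringY m n ((s'+1)/2) (s'/2) t then 1 else 0) d

lemma mod_succ_cases (M u : ℕ) (hM : 1 < M) :
    (u % M + 1 < M ∧ (u+1) % M = u % M + 1) ∨ (u % M = M - 1 ∧ (u+1) % M = 0) := by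
  have h1 : (u+1) % M = (u % M + 1) % M := by
    conv_lhs => rw [Nat.add_mod, Nat.mod_eq_of_lt hM]
  have h2 : u % M < M := Nat.mod_lt _ (by omega)
  rcases lt_or_ge (u % M + 1) M with h | h
  · exact Or.inl ⟨h, by rw [h1, Nat.mod_eq_of_lt h]⟩
  · refine Or.inr ⟨by omega, ?_⟩
    rw [h1, show u % M + 1 = M by omega, Nat.mod_self]

lemma step_core (d m n u v u' v' : ℕ) (hm : 0 < m) (hn : 0 < n) (hmn : m + n ≤ d)
    (hc : (u' = u + 1 ∧ v' = v) ∨ (u' = u ∧ v' = v + 1)) :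
    ((Finset.range d).filter fun t => ringY m n u v t ≠ ringY m n u' v' t).card = 1 := by
  rw [Finset.card_eq_one]
  rcases hc with ⟨h1, h2⟩ | ⟨h1, h2⟩ <;> subst h1 <;> subst h2
  · have hum : u % (2*m) < 2*m := Nat.mod_lt _ (by omega)
    have hb := mod_succ_cases (2*m) u (by omega)
    obtain ⟨j₀, hj₀⟩ : ∃ j₀, (u % (2*m) < m ∧ j₀ = u % (2*m)) ∨ (m ≤ u % (2*m) ∧ j₀ = u % (2*m) - m) := by
      rcases lt_or_ge (u % (2*m)) m with hlt | hge
      exacts [⟨_, Or.inl ⟨hlt, rfl⟩⟩, ⟨_, Or.inr ⟨hge, rfl⟩⟩]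
    refine ⟨j₀, ?_⟩
    ext j
    rw [Finset.mem_filter]
    simp only [Finset.mem_filter, Finset.mem_range, Finset.mem_singleton, ringY]
    by_cases hj1 : j < m
    · simp only [if_pos hj1]
      simp only [bdg, ne_eq, decide_eq_decide, iff_self, not_true_eq_false, and_false, false_iff]
      omega

    · simp only [if_neg hj1]
      by_cases hj2 : j < m + n
      · simp only [if_pos hj2]
        simp only [bdg, ne_eq, decide_eq_decide, iff_self, not_true_eq_false, and_false, false_iff]
        omega
      · simp only [if_neg hj2]
        simp only [ne_eq, eq_self_iff_true, not_true_eq_false, and_false, false_iff]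
        omega
  · have hvn : v % (2*n) < 2*n := Nat.mod_lt _ (by omega)
    have hb := mod_succ_cases (2*n) v (by omega)
    obtain ⟨j₀, hj₀⟩ : ∃ j₀, (v % (2*n) < n ∧ j₀ = m + v % (2*n)) ∨ (n ≤ v % (2*n) ∧ j₀ = m + (v % (2*n) - n)) := by
      rcases lt_or_ge (v % (2*n)) n with hlt | hge
      exacts [⟨_, Or.inl ⟨hlt, rfl⟩⟩, ⟨_, Or.inr ⟨hge, rfl⟩⟩]
    refine ⟨j₀, ?_⟩
    ext j
    rw [Finset.mem_filter]
    simp only [Finset.mem_filter, Finset.mem_range, Finset.mem_singleton, ringY]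
    by_cases hj1 : j < m
    · simp only [if_pos hj1]
      simp only [bdg, ne_eq, decide_eq_decide, iff_self, not_true_eq_false, and_false, false_iff]
      omega
    · simp only [if_neg hj1]
      by_cases hj2 : j < m + n
      · simp only [if_pos hj2]
        simp only [bdg, ne_eq, decide_eq_decide, iff_self, not_true_eq_false, and_false, false_iff]
        omega
      · simp only [if_neg hj2]
        simp only [ne_eq, eq_self_iff_true, not_true_eq_false, and_false, false_iff]
        omega

lemma step_XX (d m n : ℕ) (hm : 0 < m) (hn : 0 < n) (hmn : m + n ≤ d) (s : ℕ) :
    hammingDist (XX d m n s) (XX d m n (s+1)) = 1 := by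
  rw [hamming_XX]
  exact step_core d m n _ _ _ _ hm hn hmn (by omega)

lemma block_lb (d m n : ℕ) (hmn : m + n ≤ d) (f g : ℕ → Bool) :
    ((Finset.range m).filter fun t => f t ≠ g t).card
      + ((Finset.Ico m (m+n)).filter fun t => f t ≠ g t).card
      ≤ ((Finset.range d).filter fun t => f t ≠ g t).card := by
  rw [← Finset.card_union_of_disjoint]
  · apply Finset.card_le_card
    intro t ht
    simp only [Finset.mem_union, Finset.mem_filter, Finset.mem_range, Finset.mem_Ico] at ht ⊢
    rcases ht with ⟨h1, h2⟩ | ⟨h1, h2⟩ <;> exact ⟨by omega, h2⟩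
  · simp only [Finset.disjoint_left, Finset.mem_filter, Finset.mem_range, Finset.mem_Ico]
    intro t ht ht2; omega

lemma block2_card (m n : ℕ) (ψ : ℕ → Prop) [DecidablePred ψ] :
    ((Finset.Ico m (m+n)).filter fun t => ψ t).card
      = ((Finset.range n).filter fun t => ψ (t + m)).card := by
  apply Finset.card_bij' (fun t _ => t - m) (fun t _ => t + m)
  · intro a ha
    simp only [Finset.mem_filter, Finset.mem_Ico] at ha
    simp only [Finset.mem_filter, Finset.mem_range]
    refine ⟨by omega, ?_⟩
    rw [show a - m + m = a by omega]
    exact ha.2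
  · intro a ha
    simp only [Finset.mem_filter, Finset.mem_range] at ha
    simp only [Finset.mem_filter, Finset.mem_Ico]
    exact ⟨by omega, ha.2⟩
  · intro a ha
    simp only [Finset.mem_filter, Finset.mem_Ico] at ha
    omega
  · intro a ha
    omega

lemma cc_key (h p k : ℕ) (h0 : 0 < h) (p0 : 0 < p) (hh : (k:ℤ) + 1 ≤ 2*h)
    (a₁ a₂ : ℤ) (hd1 : a₁ - a₂ ≤ 1) (hd2 : a₂ - a₁ ≤ 1) :
    min (cycI ((4*h*p*(p+1) : ℕ) : ℤ) (a₁ + a₂)) k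
      ≤ cycI ((2*(h*p) : ℕ) : ℤ) a₁ + cycI ((2*(h*(p+1)) : ℕ) : ℤ) a₂ := by
  have hM1 : (0:ℤ) < ((2*(h*p) : ℕ) : ℤ) := by positivity
  have hM2 : (0:ℤ) < ((2*(h*(p+1)) : ℕ) : ℤ) := by positivity
  have hN : (0:ℤ) < ((4*h*p*(p+1) : ℕ) : ℤ) := by positivity
  obtain ⟨c₁, hc₁⟩ := cycI_exists _ hM1 a₁
  obtain ⟨c₂, hc₂⟩ := cycI_exists _ hM2 a₂
  by_cases heq : ((2*(h*p) : ℕ) : ℤ) * c₁ = ((2*(h*(p+1)) : ℕ) : ℤ) * c₂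
  · have hcancel : (p:ℤ) * c₁ = ((p:ℤ) + 1) * c₂ := by
      push_cast at heq
      have h2 : (2*(h:ℤ)) * ((p:ℤ)*c₁) = (2*(h:ℤ)) * (((p:ℤ)+1)*c₂) := by linear_combination heq
      exact mul_left_cancel₀ (by positivity) h2
    have hc2e : c₂ = (p:ℤ) * (c₁ - c₂) := by linear_combination (-1 : ℤ) * hcancel
    have hc1e : c₁ = ((p:ℤ)+1) * (c₁ - c₂) := by linear_combination (-1 : ℤ) * hcancel
    have key : (a₁ + a₂) - (c₁ - c₂) * ((4*h*p*(p+1) : ℕ) : ℤ)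
        = (a₁ - c₁ * ((2*(h*p) : ℕ) : ℤ)) + (a₂ - c₂ * ((2*(h*(p+1)) : ℕ) : ℤ)) := by
      push_cast
      linear_combination (2*(h:ℤ)*(p:ℤ)) * hc1e + (2*(h:ℤ)*((p:ℤ)+1)) * hc2e
    calc min (cycI ((4*h*p*(p+1) : ℕ) : ℤ) (a₁ + a₂)) k
        ≤ cycI ((4*h*p*(p+1) : ℕ) : ℤ) (a₁ + a₂) := min_le_left _ _
      _ ≤ |(a₁ + a₂) - (c₁ - c₂) * ((4*h*p*(p+1) : ℕ) : ℤ)| := cycI_le_abs _ hN _ _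
      _ ≤ |a₁ - c₁ * ((2*(h*p) : ℕ) : ℤ)| + |a₂ - c₂ * ((2*(h*(p+1)) : ℕ) : ℤ)| := by
          rw [key]; exact abs_add_le _ _
      _ = _ := by rw [hc₁, hc₂]
  · have hsep : (2*(h:ℤ)) ≤ |((2*(h*p) : ℕ) : ℤ) * c₁ - ((2*(h*(p+1)) : ℕ) : ℤ) * c₂| := by
      have e2 : ((2*(h*p) : ℕ) : ℤ) * c₁ - ((2*(h*(p+1)) : ℕ) : ℤ) * c₂
          = (2*(h:ℤ)) * ((p:ℤ) * c₁ - ((p:ℤ)+1) * c₂) := by push_cast; ring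
      rw [e2, abs_mul, abs_of_nonneg (by positivity : (0:ℤ) ≤ 2*(h:ℤ))]
      have hne : (p:ℤ) * c₁ - ((p:ℤ)+1) * c₂ ≠ 0 := by
        intro hcon; apply heq; push_cast; linear_combination (2*(h:ℤ)) * hcon
      have h1 : 1 ≤ |(p:ℤ) * c₁ - ((p:ℤ)+1) * c₂| := by
        rcases lt_or_gt_of_ne hne with hlt | hgt
        · rw [abs_of_neg hlt]; omega
        · rw [abs_of_pos hgt]; omega
      nlinarith
    have e1 : (a₁ - c₁ * ((2*(h*p) : ℕ) : ℤ)) - (a₂ - c₂ * ((2*(h*(p+1)) : ℕ) : ℤ))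
        = (a₁ - a₂) - (((2*(h*p) : ℕ) : ℤ) * c₁ - ((2*(h*(p+1)) : ℕ) : ℤ) * c₂) := by ring
    have habs : |(a₁ - c₁ * ((2*(h*p) : ℕ) : ℤ)) - (a₂ - c₂ * ((2*(h*(p+1)) : ℕ) : ℤ))|
        ≥ |((2*(h*p) : ℕ) : ℤ) * c₁ - ((2*(h*(p+1)) : ℕ) : ℤ) * c₂| - |a₁ - a₂| := by
      rw [e1, abs_sub_comm]
      exact abs_sub_abs_le_abs_sub _ _
    have haa : |a₁ - a₂| ≤ 1 := abs_le.mpr ⟨by omega, hd1⟩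
    have htri : |(a₁ - c₁ * ((2*(h*p) : ℕ) : ℤ)) - (a₂ - c₂ * ((2*(h*(p+1)) : ℕ) : ℤ))|
        ≤ |a₁ - c₁ * ((2*(h*p) : ℕ) : ℤ)| + |a₂ - c₂ * ((2*(h*(p+1)) : ℕ) : ℤ)| := abs_sub _ _
    have hk : (k:ℤ) ≤ cycI ((2*(h*p) : ℕ) : ℤ) a₁ + cycI ((2*(h*(p+1)) : ℕ) : ℤ) a₂ := by
      rw [← hc₁, ← hc₂]; linarith
    calc min (cycI ((4*h*p*(p+1) : ℕ) : ℤ) (a₁ + a₂)) k ≤ k := min_le_right _ _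
      _ ≤ _ := hk

lemma ringD (m u u' : ℕ) (hm : 0 < m) :
    ((((Finset.range m).filter fun j => bdg m (u % (2*m)) j ≠ bdg m (u' % (2*m)) j).card : ℕ) : ℤ)
      = cycI ((2*m : ℕ) : ℤ) ((u' : ℤ) - u) := by
  have h2m : 0 < 2*m := by omega
  have hτ : u % (2*m) < 2*m := Nat.mod_lt _ h2m
  have hτ' : u' % (2*m) < 2*m := Nat.mod_lt _ h2m
  have e1 : (2*m) * (u / (2*m)) + u % (2*m) = u := Nat.div_add_mod u (2*m)
  have e2 : (2*m) * (u' / (2*m)) + u' % (2*m) = u' := Nat.div_add_mod u' (2*m)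
  have hcong : ((u' : ℤ) - u) = (((u' % (2*m) : ℕ) : ℤ) - ((u % (2*m) : ℕ) : ℤ))
      + ((2*m : ℕ) : ℤ) * (((u' / (2*m) : ℕ) : ℤ) - ((u / (2*m) : ℕ) : ℤ)) := by
    push_cast
    have e1' : (2*(m:ℤ)) * ((u / (2*m) : ℕ) : ℤ) + ((u % (2*m) : ℕ) : ℤ) = (u:ℤ) := by
      exact_mod_cast congrArg (Nat.cast : ℕ → ℤ) e1
    have e2' : (2*(m:ℤ)) * ((u' / (2*m) : ℕ) : ℤ) + ((u' % (2*m) : ℕ) : ℤ) = (u':ℤ) := by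
      exact_mod_cast congrArg (Nat.cast : ℕ → ℤ) e2
    push_cast at e1' e2'
    linarith
  rw [hcong, cycI_add_mul]
  rcases le_total (u % (2*m)) (u' % (2*m)) with hle | hle
  · have hcast : (((u' % (2*m) : ℕ) : ℤ) - ((u % (2*m) : ℕ) : ℤ))
        = (((u' % (2*m)) - (u % (2*m)) : ℕ) : ℤ) := by
      push_cast [Nat.cast_sub hle]; ring
    rw [hcast, cycI_cast_lt _ _ (by omega), ring_card m _ _ hm hle hτ']
  · have hswap : ((Finset.range m).filter fun j => bdg m (u % (2*m)) j ≠ bdg m (u' % (2*m)) j)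
        = ((Finset.range m).filter fun j => bdg m (u' % (2*m)) j ≠ bdg m (u % (2*m)) j) := by
      apply Finset.filter_congr; intro j _; simp [ne_comm]
    have hcast : (((u' % (2*m) : ℕ) : ℤ) - ((u % (2*m) : ℕ) : ℤ))
        = -((((u % (2*m)) - (u' % (2*m)) : ℕ) : ℤ)) := by
      push_cast [Nat.cast_sub hle]; ring
    rw [hswap, hcast, cycI_neg, cycI_cast_lt _ _ (by omega), ring_card m _ _ hm hle hτ]

lemma cc_spread (d h p k s s' : ℕ) (h0 : 0 < h) (p0 : 0 < p) (hh : (k:ℤ) + 1 ≤ 2*(h:ℤ))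
    (hdim : h*p + h*(p+1) ≤ d) :
    min (cycI ((4*h*p*(p+1) : ℕ) : ℤ) ((s' : ℤ) - s)) k
      ≤ (hammingDist (XX d (h*p) (h*(p+1)) s) (XX d (h*p) (h*(p+1)) s') : ℤ) := by
  have hm : 0 < h*p := by positivity
  have hn : 0 < h*(p+1) := by positivity
  rw [hamming_XX]
  set m := h*p with hm'
  set n := h*(p+1) with hn'
  set u := (s+1)/2 with hu
  set v := s/2 with hv
  set u' := (s'+1)/2 with hu'
  set v' := s'/2 with hv'
  have hblock := block_lb d m n hdim (fun t => ringY m n u v t) (fun t => ringY m n u' v' t)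
  have hb1 : ((Finset.range m).filter fun t => ringY m n u v t ≠ ringY m n u' v' t)
      = ((Finset.range m).filter fun t => bdg m (u % (2*m)) t ≠ bdg m (u' % (2*m)) t) := by
    apply Finset.filter_congr
    intro t ht
    simp only [Finset.mem_range] at ht
    simp [ringY, ht]
  have hb2 : ((Finset.Ico m (m+n)).filter fun t => ringY m n u v t ≠ ringY m n u' v' t).card
      = ((Finset.range n).filter fun t => bdg n (v % (2*n)) t ≠ bdg n (v' % (2*n)) t).card := by
    rw [block2_card]
    congr 1
    apply Finset.filter_congr
    intro t ht
    simp only [Finset.mem_range] at ht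
    simp [ringY, show ¬ (t + m < m) by omega, show t + m < m + n by omega, Nat.add_sub_cancel]
  rw [hb1, hb2] at hblock
  have hD1 := ringD m u u' hm
  have hD2 := ringD n v v' hn
  have hsum : ((u' : ℤ) - u) + ((v' : ℤ) - v) = (s' : ℤ) - s := by
    rw [hu, hv, hu', hv']; omega
  have hkey := cc_key h p k h0 p0 hh ((u' : ℤ) - u) ((v' : ℤ) - v)
    (by rw [hu, hv, hu', hv']; omega) (by rw [hu, hv, hu', hv']; omega)
  rw [hsum] at hkey
  rw [← hm', ← hn'] at hkey
  have hcast : (((((Finset.range m).filter fun t => bdg m (u % (2*m)) t ≠ bdg m (u' % (2*m)) t).card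
      + ((Finset.range n).filter fun t => bdg n (v % (2*n)) t ≠ bdg n (v' % (2*n)) t).card : ℕ)) : ℤ)
      ≤ ((((Finset.range d).filter fun t => ringY m n u v t ≠ ringY m n u' v' t).card : ℕ) : ℤ) := by
    exact_mod_cast hblock
  push_cast at hcast
  rw [hD1, hD2] at hcast
  calc min (cycI ((4*h*p*(p+1) : ℕ) : ℤ) ((s' : ℤ) - s)) k
      ≤ cycI ((2*m : ℕ) : ℤ) ((u' : ℤ) - u) + cycI ((2*n : ℕ) : ℤ) ((v' : ℤ) - v) := hkey
    _ ≤ _ := hcast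

lemma cc_arith (k d : ℕ) (hk : 2 ≤ k) (hd : (k + 2) ^ 2 ≤ d) :
    ∃ h p : ℕ, 0 < h ∧ 0 < p ∧ (k + 1) ≤ 2 * h ∧ h * p + h * (p + 1) ≤ d ∧
      2 * (d - 1) * k < 4 * h * p * (p + 1) := by
  have hq0 : 2 * k + 4 ≤ d / (k / 2 + 1) := by
    rw [Nat.le_div_iff_mul_le (by omega)]
    have h1 : (2 * k + 4) * (k / 2 + 1) ≤ (k + 2) ^ 2 := by
      obtain ⟨a, rfl | rfl⟩ := Nat.even_or_odd' k
      · have e : (2 * a) / 2 = a := by omega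
        rw [e]; ring_nf; nlinarith
      · have e : (2 * a + 1) / 2 = a := by omega
        rw [e]; ring_nf; nlinarith
    omega
  refine ⟨k / 2 + 1, (d / (k / 2 + 1) - 1) / 2, by omega, by omega, by omega, ?_, ?_⟩
  all_goals {
    set h := k / 2 + 1 with hh
    set q := d / h with hqd
    set p := (q - 1) / 2 with hp
    have hq : 2 * k + 4 ≤ q := hq0
    have hq1 : 2 * p + 1 ≤ q := by omega
    have hq2 : q ≤ 2 * p + 2 := by omega
    have e3 : h * q + d % h = d := by rw [hqd]; exact Nat.div_add_mod d h
    have e4 : d % h < h := Nat.mod_lt d (by omega)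
    have hd1 : h * (2 * p + 1) ≤ h * q := Nat.mul_le_mul_left _ hq1
    have hd2 : h * q ≤ h * (2 * p + 2) := Nat.mul_le_mul_left _ hq2
    first
    | calc h * p + h * (p + 1) = h * (2 * p + 1) := by ring
        _ ≤ h * q := hd1
        _ ≤ d := by omega
    | ( have hh2 : 2 ≤ h := by omega
        have hp1 : k + 1 ≤ p := by omega
        have hdd : 1 ≤ d := by have : 0 < (k+2)^2 := by positivity
                               omega
        zify [hdd] at *
        nlinarith [mul_nonneg (show (0:ℤ) ≤ 4 * (h:ℤ) by omega)
            (show (0:ℤ) ≤ ((p:ℤ) - k) * p by nlinarith),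
          mul_nonneg (show (0:ℤ) ≤ 2 * (h:ℤ) by omega) (show (0:ℤ) ≤ (p:ℤ) by omega),
          mul_nonneg (show (0:ℤ) ≤ (k:ℤ) by omega) (show (0:ℤ) ≤ (h:ℤ) by omega)] )
  }

/-- For `k ≥ 2` and `d ≥ (k+2)²`, one has `K(d,k) > 2(d−1)k`. -/
theorem stmt_2 (k d : ℕ) (hk : 2 ≤ k) (hd : (k + 2) ^ 2 ≤ d) :
    2 * (d - 1) * k < K d k := by
  obtain ⟨h, p, h0, p0, hh, hdim, hmain⟩ := cc_arith k d hk hd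
  set m := h * p with hm'
  set n := h * (p + 1) with hn'
  set N := 4 * h * p * (p + 1) with hN'
  have hm : 0 < m := by positivity
  have hn : 0 < n := by positivity
  have hN3 : 3 ≤ N := by
    have : 4 * 1 * 1 * (1+1) ≤ 4 * h * p * (p+1) := by gcongr <;> omega
    omega
  haveI : NeZero N := ⟨by omega⟩
  set x : ZMod N → (Fin d → Bool) := fun i => XX d m n i.val with hx
  -- periodicity
  have hL2 : N = 2 * ((2*m) * (p+1)) := by rw [hN', hm']; ring
  have hL3 : (2*m) * (p+1) = (2*n) * p := by rw [hm', hn']; ring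
  have hper : XX d m n N = XX d m n 0 := by
    funext j
    show ringY m n ((N+1)/2) (N/2) j.1 = ringY m n ((0+1)/2) (0/2) j.1
    have e1 : (N+1)/2 = (2*m) * (p+1) := by omega
    have e2 : N/2 = (2*n) * p := by omega
    have e3 : ((0:ℕ)+1)/2 = 0 := by norm_num
    have e4 : (0:ℕ)/2 = 0 := by norm_num
    rw [e1, e2]
    unfold ringY
    rw [Nat.mul_mod_right, Nat.mul_mod_right]
    norm_num
  -- step condition
  have hstep : ∀ i : ZMod N, hammingDist (x i) (x (i + 1)) = 1 := by
    intro i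
    have hvlt : i.val < N := ZMod.val_lt i
    have hv : (i + 1).val = (i.val + 1) % N := by
      rw [ZMod.val_add, ZMod.val_one_eq_one_mod, Nat.mod_eq_of_lt (show 1 < N by omega)]
    rcases lt_or_ge (i.val + 1) N with hlt | hge
    · have : (i + 1).val = i.val + 1 := by rw [hv, Nat.mod_eq_of_lt hlt]
      rw [hx]
      show hammingDist (XX d m n i.val) (XX d m n (i+1).val) = 1
      rw [this]
      exact step_XX d m n hm hn hdim i.val
    · have hNv : i.val + 1 = N := by omega
      have : (i + 1).val = 0 := by rw [hv, hNv, Nat.mod_self]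
      rw [hx]
      show hammingDist (XX d m n i.val) (XX d m n (i+1).val) = 1
      rw [this, ← hper, congrArg (XX d m n) hNv.symm]
      exact step_XX d m n hm hn hdim i.val
  -- spread condition
  have hspread : ∀ i j : ZMod N, min (cycDist i j) k ≤ hammingDist (x i) (x j) := by
    intro i j
    have hcyc : ((cycDist i j : ℕ) : ℤ) = cycI (N : ℤ) ((j.val : ℤ) - i.val) := by
      unfold cycDist
      have hji : (((j - i).val : ℕ) : ℤ) = ((j.val : ℤ) - i.val) % N := by
        have hcast : ((((j.val : ℤ) - i.val : ℤ)) : ZMod N) = j - i := by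
          push_cast
          rw [ZMod.natCast_val, ZMod.natCast_val, ZMod.cast_id, ZMod.cast_id]
        rw [← hcast, ZMod.val_intCast]
      have hij : (((i - j).val : ℕ) : ℤ) = (-((j.val : ℤ) - i.val)) % N := by
        have hcast : ((((i.val : ℤ) - j.val : ℤ)) : ZMod N) = i - j := by
          push_cast
          rw [ZMod.natCast_val, ZMod.natCast_val, ZMod.cast_id, ZMod.cast_id]
        rw [show -((j.val : ℤ) - i.val) = (i.val : ℤ) - j.val by ring, ← hcast, ZMod.val_intCast]
      push_cast [Nat.cast_min]
      rw [hji, hij]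
      rfl
    have hsp := cc_spread d h p k i.val j.val h0 p0 (by exact_mod_cast hh) hdim
    rw [← hm', ← hn', ← hN'] at hsp
    have hfin : ((min (cycDist i j) k : ℕ) : ℤ) ≤ ((hammingDist (x i) (x j) : ℕ) : ℤ) := by
      rw [Nat.cast_min, hcyc]
      exact hsp
    exact_mod_cast hfin
  -- injectivity
  have hinj : Function.Injective x := by
    intro i j hij
    have h1 := hspread i j
    rw [hij, hammingDist_self] at h1
    have h2 : cycDist i j = 0 := by omega
    unfold cycDist at h2
    rcases Nat.min_eq_zero_iff.mp h2 with h3 | h3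
    · have : j - i = 0 := (ZMod.val_eq_zero _).mp h3
      linear_combination (norm := ring_nf) -this
    · have : i - j = 0 := (ZMod.val_eq_zero _).mp h3
      linear_combination (norm := ring_nf) this
  -- membership and sup
  have hmem : N ∈ {N | ∃ x : ZMod N → (Fin d → Bool), IsCircuitCode d k N x} :=
    ⟨x, hN3, hinj, hstep, hspread⟩
  have hbdd : BddAbove {N | ∃ x : ZMod N → (Fin d → Bool), IsCircuitCode d k N x} := by
    refine ⟨2 ^ d, fun M hM => ?_⟩
    obtain ⟨y, hy3, hyinj, -, -⟩ := hM
    match M, hy3 with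
    | (M' + 3), _ =>
      haveI : NeZero (M' + 3) := ⟨by omega⟩
      have hcard := Fintype.card_le_of_injective y hyinj
      rw [ZMod.card] at hcard
      simpa [Fintype.card_fun] using hcard
  have hK : N ≤ K d k := le_csSup hbdd hmem
  omega
end

section
/- Fix an integer m ≥ 0 and define d_i := 2^i + 2i + m for i ≥ 1. Then every integer d ≥ 1 can be written as d = p + Σ_{i=1}^H ε_i d_i for some integer H ≥ 1, some integer p with 0 ≤ p < d₁ = m + 4, and coefficients ε_i ∈ {0,1}. -/
lemma stmt_12_aux (m : ℕ) : ∀ d : ℕ, ∃ S : Finset ℕ,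
    (∀ j ∈ S, 1 ≤ j ∧ 2 ^ j + 2 * j + m ≤ d) ∧
    ∃ p : ℕ, p < m + 4 ∧ d = p + ∑ j ∈ S, (2 ^ j + 2 * j + m) := by
  intro d
  induction d using Nat.strong_induction_on with
  | _ d IH =>
    by_cases hsmall : d < m + 4
    · exact ⟨∅, by simp, d, hsmall, by simp⟩
    push_neg at hsmall
    set P : ℕ → Prop := fun j => 1 ≤ j ∧ 2 ^ j + 2 * j + m ≤ d with hP
    have hP1 : P 1 := ⟨le_refl 1, by norm_num; omega⟩
    have h1d : 1 ≤ d := le_trans (by omega) hsmall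
    set i := Nat.findGreatest P d with hi
    have hPi : P i := Nat.findGreatest_spec h1d hP1
    obtain ⟨hi1, hfi⟩ := hPi
    have hiltd : i < d := by
      have := Nat.lt_two_pow_self (n := i); omega
    have hnext : d < 2 ^ (i + 1) + 2 * (i + 1) + m := by
      have hnot : ¬ P (i + 1) := Nat.findGreatest_is_greatest (Nat.lt_succ_self i) hiltd
      simp only [hP] at hnot
      push_neg at hnot
      exact hnot (by omega)
    set r := d - (2 ^ i + 2 * i + m) with hr
    have hsucc : 2 ^ (i + 1) = 2 ^ i + 2 ^ i := by rw [pow_succ]; ring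
    have h2i : 2 ≤ 2 ^ i := by
      calc 2 = 2 ^ 1 := by norm_num
      _ ≤ 2 ^ i := Nat.pow_le_pow_right (by norm_num) hi1
    have hrlt : r < 2 ^ i + 2 * i + m := by omega
    have hrltd : r < d := by omega
    obtain ⟨S', hS', p, hp, hsum⟩ := IH r hrltd
    have hiS' : i ∉ S' := fun h => absurd ((hS' i h).2) (by omega)
    refine ⟨insert i S', ?_, p, hp, ?_⟩
    · intro j hj
      rcases Finset.mem_insert.mp hj with h | h
      · exact h ▸ ⟨hi1, hfi⟩
      · exact ⟨(hS' j h).1, le_trans (hS' j h).2 (le_of_lt hrltd)⟩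
    · rw [Finset.sum_insert hiS']
      omega

/-- Fix `m ≥ 0` and set `d_i = 2^i + 2i + m`. Every integer `d ≥ 1` can be
written as `d = p + ∑_{i=1}^H ε_i d_i` with `H ≥ 1`, `0 ≤ p < d₁ = m + 4` and
`ε_i ∈ {0,1}`. -/
theorem stmt_12 (m d : ℕ) (hd : 1 ≤ d) :
    ∃ H : ℕ, 1 ≤ H ∧ ∃ p : ℕ, p < m + 4 ∧ ∃ ε : ℕ → ℕ,
      (∀ i, ε i = 0 ∨ ε i = 1) ∧
      d = p + ∑ i ∈ Finset.Icc 1 H, ε i * (2 ^ i + 2 * i + m) := by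
  obtain ⟨S, hS, p, hp, hsum⟩ := stmt_12_aux m d
  set H := max 1 (S.sup id) with hH
  have hSsub : S ⊆ Finset.Icc 1 H := by
    intro j hj
    have h1 := (hS j hj).1
    have h2 : j ≤ S.sup id := Finset.le_sup (f := id) hj
    exact Finset.mem_Icc.mpr ⟨h1, le_trans h2 (le_max_right _ _)⟩
  refine ⟨H, le_max_left _ _, p, hp, fun i => if i ∈ S then 1 else 0, ?_, ?_⟩
  · intro i; by_cases h : i ∈ S <;> simp [h]
  · have h1 : ∑ i ∈ Finset.Icc 1 H, (if i ∈ S then 1 else 0) * (2 ^ i + 2 * i + m)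
        = ∑ i ∈ Finset.Icc 1 H, (if i ∈ S then (2 ^ i + 2 * i + m) else 0) := by
      apply Finset.sum_congr rfl
      intro i _
      split <;> simp
    rw [h1, ← Finset.sum_filter, Finset.filter_mem_eq_inter,
      Finset.inter_eq_right.mpr hSsub]
    exact hsum
end
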